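/- arXiv:1709.04665 — 2 statements merged into one kernel-verified Lean document; each statement's English description precedes it below -/
import Mathlib

section
/- Let $f\in L^2(0,\infty)$ and define $g(y)=\int_0^\infty e^{-yt} f(t)\,dt$ for $y>0$ (the Laplace transform of $f$). Then $g\in L^2(0,\infty)$ and $\|g\|_{L^2(0,\infty)} \le \sqrt{\pi}\,\|f\|_{L^2(0,\infty)}$. -/
open MeasureTheory Set Real

lemma gammaB {c : ℝ} (hc : 0 < c) :
    ∫⁻ t in Ioi (0:ℝ), ENNReal.ofReal (t ^ (-(1/2):ℝ) * Real.exp (-(c * t))) =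
      ENNReal.ofReal ((1/c) ^ ((1/2):ℝ) * Real.sqrt Real.pi) := by
  have hint : IntegrableOn (fun t : ℝ => t ^ (-(1/2):ℝ) * Real.exp (-(c * t))) (Ioi 0) := by
    have := integrableOn_rpow_mul_exp_neg_mul_rpow (s := -(1/2)) (p := 1) (b := c)
      (by norm_num) one_pos hc
    simpa [Real.rpow_one, neg_mul] using this
  rw [← MeasureTheory.ofReal_integral_eq_lintegral_ofReal hint ?_]
  · congr 1
    have heq := Real.integral_rpow_mul_exp_neg_mul_Ioi (a := (1/2:ℝ)) (r := c)
      (by norm_num) hc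
    rw [Real.Gamma_one_half_eq] at heq
    rw [← heq]
    apply setIntegral_congr_fun measurableSet_Ioi
    intro t ht
    norm_num
  · filter_upwards [self_mem_ae_restrict measurableSet_Ioi] with t ht
    have : (0:ℝ) < t := ht
    positivity

lemma pointwiseCS (f : ℝ → ℂ)
    (hfm : AEMeasurable (fun t => (‖f t‖₊ : ENNReal)) (volume.restrict (Ioi (0:ℝ))))
    {y : ℝ} (hy : 0 < y) :
    (‖∫ t in Ioi (0:ℝ), Real.exp (-(y * t)) • f t‖₊ : ENNReal) ^ (2:ℝ) ≤
      ENNReal.ofReal ((1/y) ^ ((1/2):ℝ) * Real.sqrt Real.pi) *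
        ∫⁻ t in Ioi (0:ℝ),
          ENNReal.ofReal (t ^ ((1/2):ℝ) * Real.exp (-(y * t))) * (‖f t‖₊ : ENNReal) ^ (2:ℝ) := by
  set μ := volume.restrict (Ioi (0:ℝ)) with hμ
  set A : ℝ → ENNReal := fun t => ENNReal.ofReal (t ^ (-(1/4):ℝ) * Real.exp (-(y * t) / 2))
    with hA
  set B : ℝ → ENNReal :=
    fun t => ENNReal.ofReal (t ^ ((1/4):ℝ) * Real.exp (-(y * t) / 2)) * (‖f t‖₊ : ENNReal)
    with hB
  have hAm : Measurable A := by fun_prop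
  have hBm : AEMeasurable B μ := by
    exact (Measurable.ennreal_ofReal (by fun_prop)).aemeasurable.mul hfm
  have h1 : (‖∫ t in Ioi (0:ℝ), Real.exp (-(y * t)) • f t‖₊ : ENNReal) ≤
      ∫⁻ t, A t * B t ∂μ := by
    refine (enorm_integral_le_lintegral_enorm _).trans ?_
    rw [← hμ]
    refine lintegral_mono_ae ?_
    filter_upwards [self_mem_ae_restrict measurableSet_Ioi] with t ht
    have ht' : (0:ℝ) < t := ht
    have : A t * B t = ENNReal.ofReal (Real.exp (-(y * t))) * (‖f t‖₊ : ENNReal) := by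
      rw [hA, hB]
      simp only
      rw [← mul_assoc, ← ENNReal.ofReal_mul (by positivity)]
      congr 2
      rw [show t ^ (-(1/4):ℝ) * Real.exp (-(y * t) / 2) * (t ^ ((1/4):ℝ) * Real.exp (-(y * t) / 2))
          = (t ^ (-(1/4):ℝ) * t ^ ((1/4):ℝ)) * (Real.exp (-(y * t) / 2) * Real.exp (-(y * t) / 2))
          by ring]
      rw [← Real.rpow_add ht', ← Real.exp_add]
      norm_num
    rw [this, enorm_smul, Real.enorm_eq_ofReal (Real.exp_pos _).le, enorm_eq_nnnorm]
  have hconj : Real.HolderConjugate 2 2 := Real.HolderConjugate.two_two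
  have h2 := ENNReal.lintegral_mul_le_Lp_mul_Lq μ hconj hAm.aemeasurable hBm
  have hA2 : ∫⁻ t, A t ^ (2:ℝ) ∂μ = ENNReal.ofReal ((1/y) ^ ((1/2):ℝ) * Real.sqrt Real.pi) := by
    rw [← gammaB hy, hμ]
    refine setLIntegral_congr_fun measurableSet_Ioi ?_
    intro t ht
    have ht' : (0:ℝ) < t := ht
    rw [hA]
    simp only
    rw [ENNReal.ofReal_rpow_of_nonneg (by positivity) (by norm_num),
      Real.mul_rpow (by positivity) (by positivity),
      ← Real.rpow_mul ht'.le, ← Real.exp_mul]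
    norm_num
  have hB2 : ∫⁻ t, B t ^ (2:ℝ) ∂μ =
      ∫⁻ t in Ioi (0:ℝ),
        ENNReal.ofReal (t ^ ((1/2):ℝ) * Real.exp (-(y * t))) * (‖f t‖₊ : ENNReal) ^ (2:ℝ) := by
    rw [hμ]
    refine setLIntegral_congr_fun measurableSet_Ioi ?_
    intro t ht
    have ht' : (0:ℝ) < t := ht
    rw [hB]
    simp only
    rw [ENNReal.mul_rpow_of_nonneg _ _ (by norm_num : (0:ℝ) ≤ 2)]
    congr 1
    rw [ENNReal.ofReal_rpow_of_nonneg (by positivity) (by norm_num),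
      Real.mul_rpow (by positivity) (by positivity),
      ← Real.rpow_mul ht'.le, ← Real.exp_mul]
    norm_num
  have h3 : (‖∫ t in Ioi (0:ℝ), Real.exp (-(y * t)) • f t‖₊ : ENNReal) ≤
      (ENNReal.ofReal ((1/y) ^ ((1/2):ℝ) * Real.sqrt Real.pi)) ^ ((1/2):ℝ) *
      (∫⁻ t in Ioi (0:ℝ),
        ENNReal.ofReal (t ^ ((1/2):ℝ) * Real.exp (-(y * t))) * (‖f t‖₊ : ENNReal) ^ (2:ℝ))
        ^ ((1/2):ℝ) := by
    refine h1.trans (h2.trans_eq ?_)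
    rw [hA2, hB2]
  calc (‖∫ t in Ioi (0:ℝ), Real.exp (-(y * t)) • f t‖₊ : ENNReal) ^ (2:ℝ)
      ≤ ((ENNReal.ofReal ((1/y) ^ ((1/2):ℝ) * Real.sqrt Real.pi)) ^ ((1/2):ℝ) *
        (∫⁻ t in Ioi (0:ℝ),
          ENNReal.ofReal (t ^ ((1/2):ℝ) * Real.exp (-(y * t))) * (‖f t‖₊ : ENNReal) ^ (2:ℝ))
          ^ ((1/2):ℝ)) ^ (2:ℝ) :=
        ENNReal.rpow_le_rpow h3 (by norm_num)
    _ = _ := by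
        rw [ENNReal.mul_rpow_of_nonneg _ _ (by norm_num : (0:ℝ) ≤ 2),
          ← ENNReal.rpow_mul, ← ENNReal.rpow_mul]
        norm_num
        rfl


theorem stmt2 (f : ℝ → ℂ)
    (hf : MemLp f 2 (volume.restrict (Set.Ioi (0:ℝ)))) :
    MemLp (fun y : ℝ => ∫ t in Set.Ioi (0:ℝ), Real.exp (-(y * t)) • f t) 2
      (volume.restrict (Set.Ioi (0:ℝ))) ∧
    eLpNorm (fun y : ℝ => ∫ t in Set.Ioi (0:ℝ), Real.exp (-(y * t)) • f t) 2
        (volume.restrict (Set.Ioi (0:ℝ)))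
      ≤ ENNReal.ofReal (Real.sqrt Real.pi) *
          eLpNorm f 2 (volume.restrict (Set.Ioi (0:ℝ))) := by
  set μ := volume.restrict (Set.Ioi (0:ℝ)) with hμ
  set g : ℝ → ℂ := fun y : ℝ => ∫ t in Set.Ioi (0:ℝ), Real.exp (-(y * t)) • f t with hg
  have hfm : AEMeasurable (fun t => (‖f t‖₊ : ENNReal)) μ := hf.1.enorm
  have hgm : AEStronglyMeasurable g μ := by
    have hker : AEStronglyMeasurable (fun p : ℝ × ℝ => Real.exp (-(p.1 * p.2)) • f p.2)
        (μ.prod μ) := by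
      refine AEStronglyMeasurable.smul (?_ : AEStronglyMeasurable (fun p : ℝ × ℝ => Real.exp (-(p.1 * p.2))) (μ.prod μ)) (hf.1.comp_snd : AEStronglyMeasurable (fun p : ℝ × ℝ => f p.2) (μ.prod μ))
      exact (Continuous.aestronglyMeasurable (by fun_prop))
    exact hker.integral_prod_right'
  have key : ∫⁻ y, (‖g y‖₊ : ENNReal) ^ (2:ℝ) ∂μ ≤
      ENNReal.ofReal Real.pi * ∫⁻ t, (‖f t‖₊ : ENNReal) ^ (2:ℝ) ∂μ := by
    have step1 : ∫⁻ y, (‖g y‖₊ : ENNReal) ^ (2:ℝ) ∂μ ≤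
        ∫⁻ y in Set.Ioi (0:ℝ), ∫⁻ t in Set.Ioi (0:ℝ),
          ENNReal.ofReal ((1/y) ^ ((1/2):ℝ) * Real.sqrt Real.pi) *
            (ENNReal.ofReal (t ^ ((1/2):ℝ) * Real.exp (-(y * t))) *
              (‖f t‖₊ : ENNReal) ^ (2:ℝ)) := by
      rw [hμ]
      refine lintegral_mono_ae ?_
      filter_upwards [self_mem_ae_restrict measurableSet_Ioi] with y hy
      have hy' : (0:ℝ) < y := hy
      calc (‖g y‖₊ : ENNReal) ^ (2:ℝ)
          ≤ ENNReal.ofReal ((1/y) ^ ((1/2):ℝ) * Real.sqrt Real.pi) *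
            ∫⁻ t in Set.Ioi (0:ℝ),
              ENNReal.ofReal (t ^ ((1/2):ℝ) * Real.exp (-(y * t))) *
                (‖f t‖₊ : ENNReal) ^ (2:ℝ) := pointwiseCS f hfm hy'
        _ = _ := (lintegral_const_mul' _ _ ENNReal.ofReal_ne_top).symm
    have hswap : ∫⁻ y in Set.Ioi (0:ℝ), ∫⁻ t in Set.Ioi (0:ℝ),
          ENNReal.ofReal ((1/y) ^ ((1/2):ℝ) * Real.sqrt Real.pi) *
            (ENNReal.ofReal (t ^ ((1/2):ℝ) * Real.exp (-(y * t))) *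
              (‖f t‖₊ : ENNReal) ^ (2:ℝ)) =
        ∫⁻ t in Set.Ioi (0:ℝ), ∫⁻ y in Set.Ioi (0:ℝ),
          ENNReal.ofReal ((1/y) ^ ((1/2):ℝ) * Real.sqrt Real.pi) *
            (ENNReal.ofReal (t ^ ((1/2):ℝ) * Real.exp (-(y * t))) *
              (‖f t‖₊ : ENNReal) ^ (2:ℝ)) := by
      rw [← hμ]
      have m1 : Measurable fun z : ℝ × ℝ =>
          ENNReal.ofReal ((1/z.1) ^ ((1/2):ℝ) * Real.sqrt Real.pi) :=
        Measurable.ennreal_ofReal (by fun_prop)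
      have m2 : Measurable fun z : ℝ × ℝ =>
          ENNReal.ofReal (z.2 ^ ((1/2):ℝ) * Real.exp (-(z.1 * z.2))) :=
        Measurable.ennreal_ofReal (by fun_prop)
      have m3 : AEMeasurable (fun z : ℝ × ℝ => (‖f z.2‖₊ : ENNReal) ^ (2:ℝ)) (μ.prod μ) := by
        refine (hfm.comp_snd.pow_const 2).congr ?_
        filter_upwards with z
        rw [← ENNReal.rpow_natCast]
        norm_num
      exact lintegral_lintegral_swap (m1.aemeasurable.mul (m2.aemeasurable.mul m3))
    have step2 : ∫⁻ t in Set.Ioi (0:ℝ), (∫⁻ y in Set.Ioi (0:ℝ),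
          ENNReal.ofReal ((1/y) ^ ((1/2):ℝ) * Real.sqrt Real.pi) *
            (ENNReal.ofReal (t ^ ((1/2):ℝ) * Real.exp (-(y * t))) *
              (‖f t‖₊ : ENNReal) ^ (2:ℝ))) =
        ∫⁻ t in Set.Ioi (0:ℝ), ENNReal.ofReal Real.pi * (‖f t‖₊ : ENNReal) ^ (2:ℝ) := by
      refine setLIntegral_congr_fun measurableSet_Ioi ?_
      intro t ht
      have ht' : (0:ℝ) < t := ht
      have inner : ∀ y ∈ Set.Ioi (0:ℝ),
          ENNReal.ofReal ((1/y) ^ ((1/2):ℝ) * Real.sqrt Real.pi) *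
            (ENNReal.ofReal (t ^ ((1/2):ℝ) * Real.exp (-(y * t))) *
              (‖f t‖₊ : ENNReal) ^ (2:ℝ)) =
          (ENNReal.ofReal (Real.sqrt Real.pi * t ^ ((1/2):ℝ)) *
            (‖f t‖₊ : ENNReal) ^ (2:ℝ)) *
            ENNReal.ofReal (y ^ (-(1/2):ℝ) * Real.exp (-(t * y))) := by
        intro y hy
        have hy' : (0:ℝ) < y := hy
        have hre : (1/y) ^ ((1/2):ℝ) * Real.sqrt Real.pi *
            (t ^ ((1/2):ℝ) * Real.exp (-(y * t))) =
            Real.sqrt Real.pi * t ^ ((1/2):ℝ) *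
              (y ^ (-(1/2):ℝ) * Real.exp (-(t * y))) := by
          rw [one_div, Real.inv_rpow hy'.le, ← Real.rpow_neg hy'.le, mul_comm y t]
          ring
        rw [← mul_assoc, ← ENNReal.ofReal_mul (by positivity), hre,
          ENNReal.ofReal_mul (by positivity)]
        ring
      calc ∫⁻ y in Set.Ioi (0:ℝ),
            ENNReal.ofReal ((1/y) ^ ((1/2):ℝ) * Real.sqrt Real.pi) *
              (ENNReal.ofReal (t ^ ((1/2):ℝ) * Real.exp (-(y * t))) *
                (‖f t‖₊ : ENNReal) ^ (2:ℝ))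
          = ∫⁻ y in Set.Ioi (0:ℝ),
              (ENNReal.ofReal (Real.sqrt Real.pi * t ^ ((1/2):ℝ)) *
                (‖f t‖₊ : ENNReal) ^ (2:ℝ)) *
                ENNReal.ofReal (y ^ (-(1/2):ℝ) * Real.exp (-(t * y))) := by
            refine setLIntegral_congr_fun measurableSet_Ioi ?_
            intro y hy
            exact inner y hy
        _ = (ENNReal.ofReal (Real.sqrt Real.pi * t ^ ((1/2):ℝ)) *
              (‖f t‖₊ : ENNReal) ^ (2:ℝ)) *
              ENNReal.ofReal ((1/t) ^ ((1/2):ℝ) * Real.sqrt Real.pi) := by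
            rw [← gammaB ht']
            have hC : ENNReal.ofReal (Real.sqrt Real.pi * t ^ ((1/2):ℝ)) *
                (‖f t‖₊ : ENNReal) ^ (2:ℝ) ≠ ⊤ :=
              ENNReal.mul_ne_top ENNReal.ofReal_ne_top
                (ENNReal.rpow_ne_top_of_nonneg (by norm_num) ENNReal.coe_ne_top)
            exact lintegral_const_mul' _ _ hC
        _ = ENNReal.ofReal Real.pi * (‖f t‖₊ : ENNReal) ^ (2:ℝ) := by
            rw [mul_comm (ENNReal.ofReal _) ((‖f t‖₊ : ENNReal) ^ (2:ℝ)), mul_assoc,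
              ← ENNReal.ofReal_mul (by positivity),
              mul_comm ((‖f t‖₊ : ENNReal) ^ (2:ℝ)) _]
            congr 2
            rw [show Real.sqrt Real.pi * t ^ ((1/2):ℝ) * ((1/t) ^ ((1/2):ℝ) * Real.sqrt Real.pi)
                = (Real.sqrt Real.pi * Real.sqrt Real.pi) * (t ^ ((1/2):ℝ) * (1/t) ^ ((1/2):ℝ))
                by ring]
            rw [Real.mul_self_sqrt Real.pi_nonneg,
              ← Real.mul_rpow ht'.le (by positivity), mul_one_div_cancel ht'.ne',
              Real.one_rpow, mul_one]
    calc ∫⁻ y, (‖g y‖₊ : ENNReal) ^ (2:ℝ) ∂μ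
        ≤ ∫⁻ t in Set.Ioi (0:ℝ), ENNReal.ofReal Real.pi * (‖f t‖₊ : ENNReal) ^ (2:ℝ) := by
          rw [← step2, ← hswap]; exact step1
      _ = ENNReal.ofReal Real.pi * ∫⁻ t, (‖f t‖₊ : ENNReal) ^ (2:ℝ) ∂μ := by
          rw [hμ]; exact lintegral_const_mul' _ _ ENNReal.ofReal_ne_top
  have hgnorm : eLpNorm g 2 μ = (∫⁻ y, (‖g y‖₊ : ENNReal) ^ (2:ℝ) ∂μ) ^ ((1/2):ℝ) := by
    rw [eLpNorm_eq_lintegral_rpow_enorm_toReal (by norm_num) (by norm_num)]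
    norm_num
    rfl
  have hfnorm : eLpNorm f 2 μ = (∫⁻ t, (‖f t‖₊ : ENNReal) ^ (2:ℝ) ∂μ) ^ ((1/2):ℝ) := by
    rw [eLpNorm_eq_lintegral_rpow_enorm_toReal (by norm_num) (by norm_num)]
    norm_num
    rfl
  have hbound : eLpNorm g 2 μ ≤ ENNReal.ofReal (Real.sqrt Real.pi) * eLpNorm f 2 μ := by
    rw [hgnorm, hfnorm]
    calc (∫⁻ y, (‖g y‖₊ : ENNReal) ^ (2:ℝ) ∂μ) ^ ((1/2):ℝ)
        ≤ (ENNReal.ofReal Real.pi * ∫⁻ t, (‖f t‖₊ : ENNReal) ^ (2:ℝ) ∂μ) ^ ((1/2):ℝ) :=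
          ENNReal.rpow_le_rpow key (by norm_num)
      _ = ENNReal.ofReal (Real.sqrt Real.pi) *
            (∫⁻ t, (‖f t‖₊ : ENNReal) ^ (2:ℝ) ∂μ) ^ ((1/2):ℝ) := by
          rw [ENNReal.mul_rpow_of_nonneg _ _ (by norm_num : (0:ℝ) ≤ 1/2),
            ENNReal.ofReal_rpow_of_nonneg Real.pi_nonneg (by norm_num),
            ← Real.sqrt_eq_rpow]
  exact ⟨⟨hgm, hbound.trans_lt (ENNReal.mul_lt_top ENNReal.ofReal_lt_top hf.2)⟩, hbound⟩
end

section
/- Let $1\le p\le\infty$ and $q$ the conjugate exponent ($1/p+1/q=1$). Suppose $F, G$ are analytic on the half-strip $\Omega_+=\{|u|<\sigma,v>0\}$ with $\sup_{0<s<\sigma,t>0}\int_{\Gamma_{s,t}}|F|^p|dw| <\infty$ and $\sup_{0<s<\sigma,t>0}\int_{\Gamma_{s,t}}|G|^q|dw| <\infty$ (sup-norm condition when the exponent is $\infty$). Then for every $0<s<\sigma$ and $t>0$: $\int_{\Gamma_{s,t}} F(w)G(w)\,dw = 0$. -/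
open MeasureTheory ENNReal Set

noncomputable def zetaParamST (s t b : ℝ) : ℂ :=
  if b < -s then -(s:ℂ) + ((t + (-b - s) : ℝ) : ℂ) * Complex.I
  else if b ≤ s then (b : ℂ) + (t : ℂ) * Complex.I
  else (s:ℂ) + ((t + (b - s) : ℝ) : ℂ) * Complex.I

noncomputable def zetaDerivST (s b : ℝ) : ℂ :=
  if b < -s then -Complex.I else if b ≤ s then 1 else Complex.I

lemma zetaParamST_eq {s : ℝ} (hs : 0 ≤ s) (t b : ℝ) :
    zetaParamST s t b
      = ((max (-s) (min s b) : ℝ) : ℂ) + ((t + max 0 (|b| - s) : ℝ) : ℂ) * Complex.I := by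
  unfold zetaParamST
  by_cases h1 : b < -s
  · rw [if_pos h1]
    have hb0 : b < 0 := lt_of_lt_of_le h1 (by linarith)
    have h2 : min s b = b := min_eq_right (by linarith)
    have h3 : max (-s) b = -s := max_eq_left h1.le
    have h4 : |b| = -b := abs_of_neg hb0
    have h5 : max 0 (-b - s) = -b - s := max_eq_right (by linarith)
    rw [h2, h3, h4, h5]
    push_cast
    ring
  · push_neg at h1
    rw [if_neg (not_lt.mpr h1)]
    by_cases h2 : b ≤ s
    · rw [if_pos h2]
      have h3 : min s b = b := min_eq_right h2
      have h4 : max (-s) b = b := max_eq_right h1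
      have h5 : |b| ≤ s := abs_le.mpr ⟨by linarith, h2⟩
      have h6 : max 0 (|b| - s) = 0 := max_eq_left (by linarith)
      rw [h3, h4, h6, add_zero]
    · push_neg at h2
      rw [if_neg (not_le.mpr h2)]
      have h3 : min s b = s := min_eq_left h2.le
      have h4 : max (-s) s = s := max_eq_right (by linarith)
      have h5 : |b| = b := abs_of_pos (lt_of_le_of_lt hs h2)
      have h6 : max 0 (|b| - s) = b - s := by rw [h5]; exact max_eq_right (by linarith)
      rw [h3, h4, h6]

lemma continuous_zetaParamST {s : ℝ} (hs : 0 ≤ s) (t : ℝ) :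
    Continuous (zetaParamST s t) := by
  have : zetaParamST s t = fun b =>
      ((max (-s) (min s b) : ℝ) : ℂ) + ((t + max 0 (|b| - s) : ℝ) : ℂ) * Complex.I :=
    funext fun b => zetaParamST_eq hs t b
  rw [this]
  exact ((Complex.continuous_ofReal.comp
      (continuous_const.max (continuous_const.min continuous_id))).add
    ((Complex.continuous_ofReal.comp
      (continuous_const.add (continuous_const.max (continuous_abs.sub continuous_const)))).mul
      continuous_const))

lemma zetaParamST_re {s : ℝ} (hs : 0 ≤ s) (t b : ℝ) :
    (zetaParamST s t b).re = max (-s) (min s b) := by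
  rw [zetaParamST_eq hs t b]; simp

lemma zetaParamST_im {s : ℝ} (hs : 0 ≤ s) (t b : ℝ) :
    (zetaParamST s t b).im = t + max 0 (|b| - s) := by
  rw [zetaParamST_eq hs t b]; simp

lemma zetaParamST_mem {σ s t : ℝ} (hs : 0 < s) (hsσ : s < σ) (ht : 0 < t) (b : ℝ) :
    zetaParamST s t b ∈ {w : ℂ | |w.re| < σ ∧ 0 < w.im} := by
  constructor
  · rw [zetaParamST_re hs.le t b]
    rw [abs_lt]
    constructor
    · have : -s ≤ max (-s) (min s b) := le_max_left _ _
      linarith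
    · have : max (-s) (min s b) ≤ s := max_le (by linarith) (min_le_left _ _)
      linarith
  · rw [zetaParamST_im hs.le t b]
    have : (0:ℝ) ≤ max 0 (|b| - s) := le_max_left _ _
    linarith

lemma zetaParamST_of_lt {s t b : ℝ} (h : b < -s) :
    zetaParamST s t b = -(s:ℂ) + ((t + (-b - s) : ℝ) : ℂ) * Complex.I := if_pos h

lemma zetaParamST_of_mem {s t b : ℝ} (h1 : -s ≤ b) (h2 : b ≤ s) :
    zetaParamST s t b = (b : ℂ) + (t : ℂ) * Complex.I := by
  unfold zetaParamST; rw [if_neg (not_lt.mpr h1), if_pos h2]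

lemma zetaParamST_of_gt {s t b : ℝ} (h : s < b) (hs : 0 ≤ s) :
    zetaParamST s t b = (s:ℂ) + ((t + (b - s) : ℝ) : ℂ) * Complex.I := by
  unfold zetaParamST
  rw [if_neg (not_lt.mpr (by linarith)), if_neg (not_le.mpr h)]
theorem stmt18 (σ : ℝ) (hσ : 0 < σ) (p q : ℝ≥0∞) (hp : 1 ≤ p)
    (hpq : p⁻¹ + q⁻¹ = 1)
    (F G : ℂ → ℂ)
    (hF : DifferentiableOn ℂ F {w : ℂ | |w.re| < σ ∧ 0 < w.im})
    (hG : DifferentiableOn ℂ G {w : ℂ | |w.re| < σ ∧ 0 < w.im})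
    (MF MG : ℝ≥0∞) (hMF : MF < ⊤) (hMG : MG < ⊤)
    (hFbd : ∀ s t : ℝ, 0 < s → s < σ → 0 < t →
      eLpNorm (fun b : ℝ => F (zetaParamST s t b)) p volume ≤ MF)
    (hGbd : ∀ s t : ℝ, 0 < s → s < σ → 0 < t →
      eLpNorm (fun b : ℝ => G (zetaParamST s t b)) q volume ≤ MG)
    (s t : ℝ) (hs : 0 < s) (hsσ : s < σ) (ht : 0 < t) :
    (∫ b : ℝ, F (zetaParamST s t b) * G (zetaParamST s t b) * zetaDerivST s b) = 0 := by
  have hΩopen : IsOpen {w : ℂ | |w.re| < σ ∧ 0 < w.im} := by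
    have : {w : ℂ | |w.re| < σ ∧ 0 < w.im}
        = {w : ℂ | |w.re| < σ} ∩ {w : ℂ | 0 < w.im} := rfl
    rw [this]
    exact (isOpen_lt (continuous_abs.comp Complex.continuous_re) continuous_const).inter
      (isOpen_lt continuous_const Complex.continuous_im)
  set Ω : Set ℂ := {w : ℂ | |w.re| < σ ∧ 0 < w.im} with hΩdef
  have hFc : ContinuousOn F Ω := hF.continuousOn
  have hGc : ContinuousOn G Ω := hG.continuousOn
  set f : ℂ → ℂ := fun w => F w * G w with hfdef
  have hfd : DifferentiableOn ℂ f Ω := hF.mul hG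
  have hfc : ContinuousOn f Ω := hfd.continuousOn
  have hre : ∀ u v : ℝ, ((u:ℂ) + (v:ℂ)*Complex.I).re = u := by intro u v; simp
  have him : ∀ u v : ℝ, ((u:ℂ) + (v:ℂ)*Complex.I).im = v := by intro u v; simp
  -- membership of vertical lines
  have hlineMem : ∀ u' v : ℝ, |u'| < σ → 0 < v → ((u':ℂ) + (v:ℂ)*Complex.I) ∈ Ω := by
    intro u' v h1 h2
    constructor
    · rw [hre]; exact h1
    · rw [him]; exact h2
  -- continuity along contours
  have hcont : ∀ (H : ℂ → ℂ), ContinuousOn H Ω → ∀ s' t' : ℝ, 0 < s' → s' < σ → 0 < t' →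
      Continuous (fun b => H (zetaParamST s' t' b)) := by
    intro H hHc s' t' hs' hs'σ ht'
    exact hHc.comp_continuous (continuous_zetaParamST hs'.le t')
      (fun b => zetaParamST_mem hs' hs'σ ht' b)
  -- continuity along vertical rays
  have hcontRay : ∀ (H : ℂ → ℂ), ContinuousOn H Ω → ∀ u' t1 : ℝ, |u'| < σ → 0 ≤ t1 →
      ContinuousOn (fun v : ℝ => H ((u':ℂ) + (v:ℂ)*Complex.I)) (Ioi t1) := by
    intro H hHc u' t1 h1 h2
    refine hHc.comp ((continuous_const.add (Complex.continuous_ofReal.mul continuous_const)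
      : Continuous fun v : ℝ => (u':ℂ) + (v:ℂ)*Complex.I)).continuousOn ?_
    intro v hv
    exact hlineMem u' v h1 (lt_of_le_of_lt h2 hv)
  -- vertical ray eLpNorm bounds
  have hray : ∀ (H : ℂ → ℂ) (r M : ℝ≥0∞), ContinuousOn H Ω →
      (∀ s' t' : ℝ, 0 < s' → s' < σ → 0 < t' →
        eLpNorm (fun b : ℝ => H (zetaParamST s' t' b)) r volume ≤ M) →
      ∀ u' t1 : ℝ, u' ≠ 0 → |u'| < σ → 0 < t1 →
      eLpNorm (fun v : ℝ => H ((u':ℂ) + (v:ℂ)*Complex.I)) r (volume.restrict (Ioi t1)) ≤ M := by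
    intro H r M hHc hHbd u' t1 hu0 huσ ht1
    rcases hu0.lt_or_gt with hneg | hpos
    · -- u' < 0 : left ray of Γ_{-u', t1}
      have hbd := hHbd (-u') t1 (by linarith) (by rwa [abs_of_neg hneg] at huσ) ht1
      set φ : ℝ → ℝ := fun v => (t1 + u') - v with hφdef
      have h₁ : MeasurePreserving φ volume volume := Measure.measurePreserving_sub_left volume (t1 + u')
      have h₂ : MeasurableEmbedding φ := (Homeomorph.subLeft (t1 + u')).measurableEmbedding
      have himg : φ '' Ioi t1 = Iio u' := by
        rw [hφdef]; rw [image_const_sub_Ioi]; congr 1; ring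
      have hmp : MeasurePreserving φ (volume.restrict (Ioi t1)) (volume.restrict (Iio u')) := by
        have := h₁.restrict_image_emb h₂ (Ioi t1); rwa [himg] at this
      set g : ℝ → ℂ := fun b => H (zetaParamST (-u') t1 b) with hgdef
      have hgc : Continuous g := hcont H hHc (-u') t1 (by linarith)
        (by rwa [abs_of_neg hneg] at huσ) ht1
      calc eLpNorm (fun v : ℝ => H ((u':ℂ) + (v:ℂ)*Complex.I)) r (volume.restrict (Ioi t1))
          = eLpNorm (g ∘ φ) r (volume.restrict (Ioi t1)) := by
            refine eLpNorm_congr_ae ?_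
            filter_upwards [ae_restrict_mem measurableSet_Ioi] with v hv
            have hv' : φ v < -(-u') := by simp only [hφdef]; simp only [neg_neg]; linarith [mem_Ioi.mp hv]
            show H ((u':ℂ) + (v:ℂ)*Complex.I) = H (zetaParamST (-u') t1 (φ v))
            rw [zetaParamST_of_lt hv']
            congr 2
            · push_cast; ring
            · push_cast [hφdef]; ring
        _ = eLpNorm g r (volume.restrict (Iio u')) :=
            eLpNorm_comp_measurePreserving
              (hgc.aestronglyMeasurable.restrict) hmp
        _ ≤ eLpNorm g r volume := eLpNorm_mono_measure _ Measure.restrict_le_self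
        _ ≤ M := hbd
    · -- 0 < u' : right ray of Γ_{u', t1}
      have hbd := hHbd u' t1 hpos (by rwa [abs_of_pos hpos] at huσ) ht1
      set φ : ℝ → ℝ := fun v => v - (t1 - u') with hφdef
      have h₁ : MeasurePreserving φ volume volume := measurePreserving_sub_right volume (t1 - u')
      have h₂ : MeasurableEmbedding φ := (Homeomorph.subRight (t1 - u')).measurableEmbedding
      have himg : φ '' Ioi t1 = Ioi u' := by
        rw [hφdef]; rw [image_sub_const_Ioi]; congr 1; ring
      have hmp : MeasurePreserving φ (volume.restrict (Ioi t1)) (volume.restrict (Ioi u')) := by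
        have := h₁.restrict_image_emb h₂ (Ioi t1); rwa [himg] at this
      set g : ℝ → ℂ := fun b => H (zetaParamST u' t1 b) with hgdef
      have hgc : Continuous g := hcont H hHc u' t1 hpos
        (by rwa [abs_of_pos hpos] at huσ) ht1
      calc eLpNorm (fun v : ℝ => H ((u':ℂ) + (v:ℂ)*Complex.I)) r (volume.restrict (Ioi t1))
          = eLpNorm (g ∘ φ) r (volume.restrict (Ioi t1)) := by
            refine eLpNorm_congr_ae ?_
            filter_upwards [ae_restrict_mem measurableSet_Ioi] with v hv
            have hv' : u' < φ v := by simp only [hφdef]; linarith [mem_Ioi.mp hv]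
            show H ((u':ℂ) + (v:ℂ)*Complex.I) = H (zetaParamST u' t1 (φ v))
            rw [zetaParamST_of_gt hv' hpos.le]
            congr 2
            push_cast [hφdef]; ring
        _ = eLpNorm g r (volume.restrict (Ioi u')) :=
            eLpNorm_comp_measurePreserving (hgc.aestronglyMeasurable.restrict) hmp
        _ ≤ eLpNorm g r volume := eLpNorm_mono_measure _ Measure.restrict_le_self
        _ ≤ M := hbd
  -- per-u vertical Hölder bound for the product
  have hprod : ∀ u' t1 : ℝ, u' ≠ 0 → |u'| < σ → 0 < t1 →
      (∫⁻ v in Ioi t1, (‖F ((u':ℂ) + (v:ℂ)*Complex.I)‖₊ : ℝ≥0∞)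
        * (‖G ((u':ℂ) + (v:ℂ)*Complex.I)‖₊ : ℝ≥0∞)) ≤ MF * MG := by
    intro u' t1 h0 hσ' ht1
    have hFr := hray F p MF hFc hFbd u' t1 h0 hσ' ht1
    have hGr := hray G q MG hGc hGbd u' t1 h0 hσ' ht1
    have hFm : AEStronglyMeasurable (fun v : ℝ => F ((u':ℂ) + (v:ℂ)*Complex.I))
        (volume.restrict (Ioi t1)) :=
      (hcontRay F hFc u' t1 hσ' ht1.le).aestronglyMeasurable measurableSet_Ioi
    have hGm : AEStronglyMeasurable (fun v : ℝ => G ((u':ℂ) + (v:ℂ)*Complex.I))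
        (volume.restrict (Ioi t1)) :=
      (hcontRay G hGc u' t1 hσ' ht1.le).aestronglyMeasurable measurableSet_Ioi
    have hpqr : (1:ℝ≥0∞)/1 = 1/p + 1/q := by
      rw [one_div_one, one_div, one_div, hpq]
    have hH := eLpNorm_smul_le_mul_eLpNorm (μ := volume.restrict (Ioi t1)) (p := p) (q := q) (r := 1) (hpqr := ⟨by rw [inv_one]; exact hpq⟩) hGm hFm
    calc (∫⁻ v in Ioi t1, (‖F ((u':ℂ) + (v:ℂ)*Complex.I)‖₊ : ℝ≥0∞)
          * (‖G ((u':ℂ) + (v:ℂ)*Complex.I)‖₊ : ℝ≥0∞))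
        = eLpNorm ((fun v : ℝ => F ((u':ℂ) + (v:ℂ)*Complex.I))
            • (fun v : ℝ => G ((u':ℂ) + (v:ℂ)*Complex.I))) 1 (volume.restrict (Ioi t1)) := by
          rw [eLpNorm_one_eq_lintegral_enorm]
          refine lintegral_congr fun v => ?_
          simp [nnnorm_mul, ENNReal.coe_mul]; rfl
      _ ≤ eLpNorm (fun v : ℝ => F ((u':ℂ) + (v:ℂ)*Complex.I)) p (volume.restrict (Ioi t1))
            * eLpNorm (fun v : ℝ => G ((u':ℂ) + (v:ℂ)*Complex.I)) q (volume.restrict (Ioi t1)) := hH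
      _ ≤ MF * MG := mul_le_mul' hFr hGr
  -- integrability of f along vertical rays
  have hrayInt : ∀ u' t1 : ℝ, u' ≠ 0 → |u'| < σ → 0 < t1 →
      IntegrableOn (fun v : ℝ => f ((u':ℂ) + (v:ℂ)*Complex.I)) (Ioi t1) := by
    intro u' t1 h0 hσ' ht1
    rw [IntegrableOn, ← memLp_one_iff_integrable]
    constructor
    · exact (hcontRay f hfc u' t1 hσ' ht1.le).aestronglyMeasurable measurableSet_Ioi
    · rw [eLpNorm_one_eq_lintegral_enorm]
      calc (∫⁻ v in Ioi t1, (‖f ((u':ℂ) + (v:ℂ)*Complex.I)‖₊ : ℝ≥0∞))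
          = (∫⁻ v in Ioi t1, (‖F ((u':ℂ) + (v:ℂ)*Complex.I)‖₊ : ℝ≥0∞)
              * (‖G ((u':ℂ) + (v:ℂ)*Complex.I)‖₊ : ℝ≥0∞)) := by
            refine lintegral_congr fun v => ?_
            simp [hfdef, nnnorm_mul, ENNReal.coe_mul]
        _ ≤ MF * MG := hprod u' t1 h0 hσ' ht1
        _ < ⊤ := ENNReal.mul_lt_top hMF hMG
  -- definitions of the three integrals
  set B : ℝ → ℂ := fun v => ∫ u in Ioc (-s) s, f ((u:ℂ) + (v:ℂ)*Complex.I) with hBdef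
  set R : ℝ → ℂ := fun t' => ∫ v in Ioi t', f ((s:ℂ) + (v:ℂ)*Complex.I) with hRdef
  set L : ℝ → ℂ := fun t' => ∫ v in Ioi t', f (-(s:ℂ) + (v:ℂ)*Complex.I) with hLdef
  have hsne : s ≠ 0 := hs.ne'
  have hsabs : |s| < σ := by rwa [abs_of_pos hs]
  have hnsne : -s ≠ 0 := by simp [hsne]
  have hnsabs : |(-s)| < σ := by rwa [abs_neg, abs_of_pos hs]
  have hRint : IntegrableOn (fun v : ℝ => f ((s:ℂ) + (v:ℂ)*Complex.I)) (Ioi t) :=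
    hrayInt s t hsne hsabs ht
  have hLint0 : IntegrableOn (fun v : ℝ => f (((-s:ℝ):ℂ) + (v:ℂ)*Complex.I)) (Ioi t) :=
    hrayInt (-s) t hnsne hnsabs ht
  have hLint : IntegrableOn (fun v : ℝ => f (-(s:ℂ) + (v:ℂ)*Complex.I)) (Ioi t) := by
    have : (fun v : ℝ => f (-(s:ℂ) + (v:ℂ)*Complex.I))
        = (fun v : ℝ => f (((-s:ℝ):ℂ) + (v:ℂ)*Complex.I)) := by
      funext v; push_cast; ring_nf
    rw [this]; exact hLint0
  -- splitting the rays
  have hsplitR : ∀ t' : ℝ, t ≤ t' →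
      (∫ v in t..t', f ((s:ℂ) + (v:ℂ)*Complex.I)) = R t - R t' := by
    intro t' htt'
    have hu : Ioc t t' ∪ Ioi t' = Ioi t := Ioc_union_Ioi_eq_Ioi htt'
    have hsum := setIntegral_union (Ioc_disjoint_Ioi le_rfl) measurableSet_Ioi
      (hRint.mono_set Ioc_subset_Ioi_self) (hRint.mono_set (Ioi_subset_Ioi htt'))
      (f := fun v : ℝ => f ((s:ℂ) + (v:ℂ)*Complex.I))
    rw [hu] at hsum
    rw [intervalIntegral.integral_of_le htt']
    rw [hRdef]
    simp only
    rw [eq_sub_iff_add_eq]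
    exact hsum.symm
  have hsplitL : ∀ t' : ℝ, t ≤ t' →
      (∫ v in t..t', f (-(s:ℂ) + (v:ℂ)*Complex.I)) = L t - L t' := by
    intro t' htt'
    have hu : Ioc t t' ∪ Ioi t' = Ioi t := Ioc_union_Ioi_eq_Ioi htt'
    have hsum := setIntegral_union (Ioc_disjoint_Ioi le_rfl) measurableSet_Ioi
      (hLint.mono_set Ioc_subset_Ioi_self) (hLint.mono_set (Ioi_subset_Ioi htt'))
      (f := fun v : ℝ => f (-(s:ℂ) + (v:ℂ)*Complex.I))
    rw [hu] at hsum
    rw [intervalIntegral.integral_of_le htt']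
    rw [hLdef]
    simp only
    rw [eq_sub_iff_add_eq]
    exact hsum.symm
  -- the target integral equals B t + I•(R t) - I•(L t)
  have claim1 : (∫ b : ℝ, F (zetaParamST s t b) * G (zetaParamST s t b) * zetaDerivST s b)
      = B t + Complex.I • R t - Complex.I • L t := by
    have hζint : Integrable (fun b : ℝ => f (zetaParamST s t b)) volume := by
      have hFmem : MemLp (fun b : ℝ => F (zetaParamST s t b)) p volume :=
        ⟨(hcont F hFc s t hs hsσ ht).aestronglyMeasurable,
          lt_of_le_of_lt (hFbd s t hs hsσ ht) hMF⟩
      have hGmem : MemLp (fun b : ℝ => G (zetaParamST s t b)) q volume :=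
        ⟨(hcont G hGc s t hs hsσ ht).aestronglyMeasurable,
          lt_of_le_of_lt (hGbd s t hs hsσ ht) hMG⟩
      have hpqr : (1:ℝ≥0∞)/1 = 1/p + 1/q := by rw [one_div_one, one_div, one_div, hpq]
      have hmem := hGmem.smul hFmem (r := 1) (hpqr := ⟨by rw [inv_one]; exact hpq⟩)
      rw [memLp_one_iff_integrable] at hmem
      exact hmem.congr (Filter.Eventually.of_forall fun b => by simp [hfdef, smul_eq_mul])
    have hder : AEStronglyMeasurable (zetaDerivST s) volume := by
      unfold zetaDerivST
      exact (Measurable.ite (measurableSet_lt measurable_id measurable_const) measurable_const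
        (Measurable.ite (measurableSet_le measurable_id measurable_const) measurable_const
          measurable_const)).aestronglyMeasurable
    have hgint : Integrable (fun b : ℝ => zetaDerivST s b * f (zetaParamST s t b)) volume := by
      refine hζint.bdd_mul (c := 1) hder (Filter.Eventually.of_forall fun b => ?_)
      unfold zetaDerivST
      split_ifs <;> simp
    have hint_eq : (fun b : ℝ => F (zetaParamST s t b) * G (zetaParamST s t b) * zetaDerivST s b)
        = fun b : ℝ => zetaDerivST s b * f (zetaParamST s t b) := by
      funext b
      simp only [hfdef]
      ring
    rw [hint_eq]
    set g : ℝ → ℂ := fun b => zetaDerivST s b * f (zetaParamST s t b) with hgdef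
    have hsplit1 : (∫ b, g b) = (∫ b in Iic (-s), g b) + ∫ b in Ioi (-s), g b :=
      (intervalIntegral.integral_Iic_add_Ioi hgint.integrableOn hgint.integrableOn).symm
    have hsplit2 : (∫ b in Ioi (-s), g b) = (∫ b in Ioc (-s) s, g b) + ∫ b in Ioi s, g b := by
      rw [← Ioc_union_Ioi_eq_Ioi (by linarith : -s ≤ s)]
      exact setIntegral_union (Ioc_disjoint_Ioi le_rfl) measurableSet_Ioi
        hgint.integrableOn hgint.integrableOn
    have hIic : (∫ b in Iic (-s), g b) = ∫ b in Iio (-s), g b :=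
      (setIntegral_congr_set Iio_ae_eq_Iic).symm
    -- piece 2 : the bottom
    have hpiece2 : (∫ b in Ioc (-s) s, g b) = B t := by
      rw [hBdef]
      refine setIntegral_congr_fun measurableSet_Ioc fun b hb => ?_
      rw [hgdef]
      simp only
      rw [zetaParamST_of_mem (le_of_lt hb.1) hb.2]
      have hder1 : zetaDerivST s b = 1 := by
        unfold zetaDerivST
        rw [if_neg (not_lt.mpr (le_of_lt hb.1)), if_pos hb.2]
      rw [hder1, one_mul]
    -- piece 3 : the right ray
    have hpiece3 : (∫ b in Ioi s, g b) = Complex.I • R t := by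
      have h3a : (∫ b in Ioi s, g b)
          = ∫ b in Ioi s, Complex.I • f ((s:ℂ) + ((t - s + b : ℝ):ℂ)*Complex.I) := by
        refine setIntegral_congr_fun measurableSet_Ioi fun b hb => ?_
        rw [hgdef]
        simp only
        rw [zetaParamST_of_gt (mem_Ioi.mp hb) hs.le]
        have hder3 : zetaDerivST s b = Complex.I := by
          unfold zetaDerivST
          rw [if_neg (not_lt.mpr (by linarith [mem_Ioi.mp hb] : -s ≤ b)),
            if_neg (not_le.mpr (mem_Ioi.mp hb))]
        rw [hder3, smul_eq_mul]
        have harg : t + (b - s) = t - s + b := by ring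
        rw [harg]
      rw [h3a, integral_smul]
      congr 1
      have himg3 : (fun v : ℝ => v - (t - s)) '' Ioi t = Ioi s := by
        rw [image_sub_const_Ioi]; congr 1; ring
      have h₂ : MeasurableEmbedding (fun v : ℝ => v - (t - s)) :=
        (Homeomorph.subRight (t - s)).measurableEmbedding
      have hcv := (measurePreserving_sub_right volume (t - s)).setIntegral_image_emb h₂
        (fun b => f ((s:ℂ) + ((t - s + b : ℝ):ℂ)*Complex.I)) (Ioi t)
      rw [himg3] at hcv
      rw [hcv, hRdef]
      refine setIntegral_congr_fun measurableSet_Ioi fun v hv => ?_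
      have harg : t - s + (v - (t - s)) = v := by ring
      rw [harg]
    -- piece 1 : the left ray
    have hpiece1 : (∫ b in Iio (-s), g b) = (-Complex.I) • L t := by
      have h1a : (∫ b in Iio (-s), g b)
          = ∫ b in Iio (-s), (-Complex.I) • f (-(s:ℂ) + ((t - s - b : ℝ):ℂ)*Complex.I) := by
        refine setIntegral_congr_fun measurableSet_Iio fun b hb => ?_
        rw [hgdef]
        simp only
        rw [zetaParamST_of_lt (mem_Iio.mp hb)]
        have hder2 : zetaDerivST s b = -Complex.I := by
          unfold zetaDerivST
          rw [if_pos (mem_Iio.mp hb)]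
        rw [hder2, smul_eq_mul]
        have harg : t + (-b - s) = t - s - b := by ring
        rw [harg]
      rw [h1a, integral_smul]
      congr 1
      have himg1 : (fun v : ℝ => (t - s) - v) '' Ioi t = Iio (-s) := by
        rw [image_const_sub_Ioi]; congr 1; ring
      have h₂ : MeasurableEmbedding (fun v : ℝ => (t - s) - v) :=
        (Homeomorph.subLeft (t - s)).measurableEmbedding
      have hcv := (Measure.measurePreserving_sub_left volume (t - s)).setIntegral_image_emb h₂
        (fun b => f (-(s:ℂ) + ((t - s - b : ℝ):ℂ)*Complex.I)) (Ioi t)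
      rw [himg1] at hcv
      rw [hcv, hLdef]
      refine setIntegral_congr_fun measurableSet_Ioi fun v hv => ?_
      have harg : t - s - (t - s - v) = v := by ring
      rw [harg]
    rw [hsplit1, hsplit2, hIic, hpiece1, hpiece2, hpiece3]
    simp only [smul_eq_mul, neg_mul]
    ring
  -- contour shifting via Cauchy
  have claim2 : ∀ t' : ℝ, t < t' →
      B t + Complex.I • R t - Complex.I • L t
        = B t' + Complex.I • R t' - Complex.I • L t' := by
    intro t' htt'
    have hrect := Complex.integral_boundary_rect_eq_zero_of_differentiableOn f
      (((-s : ℝ):ℂ) + (t:ℂ)*Complex.I) (((s:ℝ):ℂ) + (t':ℂ)*Complex.I) ?_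
    · simp only [Complex.add_re, Complex.add_im, Complex.neg_re, Complex.neg_im,
        Complex.ofReal_re, Complex.ofReal_im, Complex.mul_re, Complex.mul_im,
        Complex.I_re, Complex.I_im, mul_zero, mul_one, zero_mul, sub_zero, zero_sub,
        add_zero, zero_add, neg_zero, neg_neg, Complex.ofReal_neg] at hrect
      have hB1 : (∫ x in (-s)..s, f ((x:ℂ) + (t:ℂ)*Complex.I)) = B t := by
        rw [intervalIntegral.integral_of_le (by linarith), hBdef]
      have hB2 : (∫ x in (-s)..s, f ((x:ℂ) + (t':ℂ)*Complex.I)) = B t' := by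
        rw [intervalIntegral.integral_of_le (by linarith), hBdef]
      have hR2 := hsplitR t' htt'.le
      have hL2 := hsplitL t' htt'.le
      rw [hB1, hB2, hR2, hL2] at hrect
      simp only [smul_eq_mul] at hrect ⊢
      linear_combination hrect
    · refine hfd.mono ?_
      intro w hw
      rw [Complex.mem_reProdIm] at hw
      obtain ⟨hw1, hw2⟩ := hw
      simp only [Complex.add_re, Complex.add_im, Complex.neg_re, Complex.neg_im,
        Complex.ofReal_re, Complex.ofReal_im, Complex.mul_re, Complex.mul_im,
        Complex.I_re, Complex.I_im, mul_zero, mul_one, zero_mul, sub_zero, zero_sub,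
        add_zero, zero_add, neg_zero, neg_neg] at hw1 hw2
      rw [uIcc_of_le (by linarith : -s ≤ s)] at hw1
      rw [uIcc_of_le (by linarith : t ≤ t')] at hw2
      constructor
      · rw [abs_lt]
        constructor
        · have := hw1.1; linarith
        · have := hw1.2; linarith
      · have := hw2.1; linarith
  -- limits of R and L
  have claim3R : Filter.Tendsto R Filter.atTop (nhds 0) := by
    have key := MeasureTheory.intervalIntegral_tendsto_integral_Ioi t hRint Filter.tendsto_id
    have h1 : Filter.Tendsto (fun t' : ℝ => R t - ∫ v in t..t', f ((s:ℂ) + (v:ℂ)*Complex.I))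
        Filter.atTop (nhds 0) := by
      have := tendsto_const_nhds (x := R t) (f := Filter.atTop (α := ℝ)) |>.sub key
      simpa [hRdef] using this
    refine h1.congr' ?_
    filter_upwards [Filter.eventually_ge_atTop t] with t' htt'
    rw [hsplitR t' htt']; ring
  have claim3L : Filter.Tendsto L Filter.atTop (nhds 0) := by
    have key := MeasureTheory.intervalIntegral_tendsto_integral_Ioi t hLint Filter.tendsto_id
    have h1 : Filter.Tendsto (fun t' : ℝ => L t - ∫ v in t..t', f (-(s:ℂ) + (v:ℂ)*Complex.I))
        Filter.atTop (nhds 0) := by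
      have := tendsto_const_nhds (x := L t) (f := Filter.atTop (α := ℝ)) |>.sub key
      simpa [hLdef] using this
    refine h1.congr' ?_
    filter_upwards [Filter.eventually_ge_atTop t] with t' htt'
    rw [hsplitL t' htt']; ring
  -- frequently small B
  have claim4 : ∀ ε : ℝ, 0 < ε → ∀ V : ℝ, ∃ v : ℝ, V ≤ v ∧ t < v ∧ ‖B v‖ ≤ ε := by
    intro ε hε V
    by_contra hcon
    push_neg at hcon
    set W : ℝ := max V t with hWdef
    set J : ℝ → ℝ≥0∞ := fun v => ∫⁻ u in Ioc (-s) s,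
        (‖F ((u:ℂ) + (v:ℂ)*Complex.I)‖₊ : ℝ≥0∞) * (‖G ((u:ℂ) + (v:ℂ)*Complex.I)‖₊ : ℝ≥0∞)
      with hJdef
    have hlow : ∀ v ∈ Ioi W, ENNReal.ofReal ε ≤ J v := by
      intro v hv
      have hv1 : V ≤ v := le_of_lt (lt_of_le_of_lt (le_max_left _ _) hv)
      have hv2 : t < v := lt_of_le_of_lt (le_max_right _ _) hv
      have hBv := hcon v hv1 hv2
      calc ENNReal.ofReal ε ≤ ENNReal.ofReal ‖B v‖ := ENNReal.ofReal_le_ofReal hBv.le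
        _ = (‖B v‖₊ : ℝ≥0∞) := ofReal_norm _
        _ ≤ ∫⁻ u in Ioc (-s) s, (‖f ((u:ℂ) + (v:ℂ)*Complex.I)‖₊ : ℝ≥0∞) :=
            enorm_integral_le_lintegral_enorm _
        _ = J v := by
            refine lintegral_congr fun u => ?_
            simp [hfdef, nnnorm_mul, ENNReal.coe_mul]
    have hlower : (∫⁻ v in Ioi W, J v) = ⊤ := by
      have h1 : (∫⁻ (_ : ℝ) in Ioi W, ENNReal.ofReal ε) ≤ ∫⁻ v in Ioi W, J v := by
        refine lintegral_mono_ae ?_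
        filter_upwards [ae_restrict_mem measurableSet_Ioi] with v hv
        exact hlow v hv
      rw [setLIntegral_const, Real.volume_Ioi,
        ENNReal.mul_top (by simpa using (ENNReal.ofReal_pos.mpr hε).ne')] at h1
      exact top_le_iff.mp h1
    have hmeasprod : AEMeasurable (fun z : ℝ × ℝ =>
        (‖F ((z.1:ℂ) + (z.2:ℂ)*Complex.I)‖₊ : ℝ≥0∞) * (‖G ((z.1:ℂ) + (z.2:ℂ)*Complex.I)‖₊ : ℝ≥0∞))
        ((volume.restrict (Ioc (-s) s)).prod (volume.restrict (Ioi t))) := by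
      have hS : MeasurableSet (Ioc (-s) s ×ˢ Ioi t) := measurableSet_Ioc.prod measurableSet_Ioi
      have hφ : Continuous (fun z : ℝ × ℝ => (z.1:ℂ) + (z.2:ℂ)*Complex.I) :=
        (Complex.continuous_ofReal.comp continuous_fst).add
          ((Complex.continuous_ofReal.comp continuous_snd).mul continuous_const)
      have hmap : MapsTo (fun z : ℝ × ℝ => (z.1:ℂ) + (z.2:ℂ)*Complex.I)
          (Ioc (-s) s ×ˢ Ioi t) Ω := by
        rintro ⟨u, v⟩ ⟨hu, hv⟩
        exact hlineMem u v (lt_of_le_of_lt (abs_le.mpr ⟨by linarith [hu.1], hu.2⟩) hsσ)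
          (lt_trans ht hv)
      have hFm : AEMeasurable (fun z : ℝ × ℝ => F ((z.1:ℂ) + (z.2:ℂ)*Complex.I))
          ((volume.prod volume).restrict (Ioc (-s) s ×ˢ Ioi t)) :=
        (hFc.comp hφ.continuousOn hmap).aemeasurable hS
      have hGm : AEMeasurable (fun z : ℝ × ℝ => G ((z.1:ℂ) + (z.2:ℂ)*Complex.I))
          ((volume.prod volume).restrict (Ioc (-s) s ×ˢ Ioi t)) :=
        (hGc.comp hφ.continuousOn hmap).aemeasurable hS
      rw [Measure.prod_restrict]
      exact hFm.enorm.mul hGm.enorm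
    have hswap := lintegral_lintegral_swap (μ := volume.restrict (Ioc (-s) s))
      (ν := volume.restrict (Ioi t))
      (f := fun u v => (‖F ((u:ℂ) + (v:ℂ)*Complex.I)‖₊ : ℝ≥0∞)
        * (‖G ((u:ℂ) + (v:ℂ)*Complex.I)‖₊ : ℝ≥0∞)) hmeasprod
    have hne0 : ∀ᵐ u ∂(volume.restrict (Ioc (-s) s)), u ≠ 0 := by
      refine ae_restrict_of_ae ?_
      rw [ae_iff]
      convert Real.volume_singleton (a := 0) using 2
      ext u; simp
    have hupper : (∫⁻ v in Ioi t, J v) < ⊤ := by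
      calc (∫⁻ v in Ioi t, J v)
          = ∫⁻ u in Ioc (-s) s, ∫⁻ v in Ioi t,
              (‖F ((u:ℂ) + (v:ℂ)*Complex.I)‖₊ : ℝ≥0∞)
                * (‖G ((u:ℂ) + (v:ℂ)*Complex.I)‖₊ : ℝ≥0∞) := hswap.symm
        _ ≤ ∫⁻ (_ : ℝ) in Ioc (-s) s, MF * MG := by
            refine lintegral_mono_ae ?_
            filter_upwards [ae_restrict_mem measurableSet_Ioc, hne0] with u hu hu0
            exact hprod u t hu0
              (lt_of_le_of_lt (abs_le.mpr ⟨by linarith [hu.1], hu.2⟩) hsσ) ht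
        _ = (MF * MG) * volume (Ioc (-s) s) := setLIntegral_const _ _
        _ < ⊤ := by
            rw [Real.volume_Ioc]
            exact ENNReal.mul_lt_top (ENNReal.mul_lt_top hMF hMG) ENNReal.ofReal_lt_top
    have hmono : (∫⁻ v in Ioi W, J v) ≤ ∫⁻ v in Ioi t, J v :=
      lintegral_mono_set (Ioi_subset_Ioi (le_max_right V t))
    rw [hlower] at hmono
    exact absurd (lt_of_le_of_lt hmono hupper) (lt_irrefl ⊤)
  -- conclusion
  rw [claim1]
  set T := B t + Complex.I • R t - Complex.I • L t with hTdef
  by_contra hT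
  have hTpos : 0 < ‖T‖ := norm_pos_iff.mpr hT
  set ε : ℝ := ‖T‖/4 with hεdef
  have hε : 0 < ε := by positivity
  have hRe : ∀ᶠ t' in Filter.atTop, ‖R t'‖ < ε := by
    have := claim3R.norm
    rw [norm_zero] at this
    exact this.eventually_lt_const hε
  have hLe : ∀ᶠ t' in Filter.atTop, ‖L t'‖ < ε := by
    have := claim3L.norm
    rw [norm_zero] at this
    exact this.eventually_lt_const hε
  obtain ⟨V, hV⟩ := Filter.eventually_atTop.mp (hRe.and hLe)
  obtain ⟨v, hv1, hv2, hv3⟩ := claim4 ε hε V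
  have hid := claim2 v hv2
  have h1 : ‖T‖ ≤ ‖B v‖ + ‖R v‖ + ‖L v‖ := by
    rw [hid]
    calc ‖B v + Complex.I • R v - Complex.I • L v‖
        ≤ ‖B v + Complex.I • R v‖ + ‖Complex.I • L v‖ := norm_sub_le _ _
      _ ≤ ‖B v‖ + ‖Complex.I • R v‖ + ‖Complex.I • L v‖ := by
          have := norm_add_le (B v) (Complex.I • R v); linarith
      _ = ‖B v‖ + ‖R v‖ + ‖L v‖ := by
          rw [norm_smul, norm_smul, Complex.norm_I, one_mul, one_mul]
  obtain ⟨hRv, hLv⟩ := hV v hv1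
  have : ‖T‖ ≤ 3 * ε := by linarith
  rw [hεdef] at this
  linarith
end
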